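/- Let m ≥ 2, let X be a type, let A, B ⊆ X be disjoint subsets, and let p_A : Aᶜ → X_A and p_B : Bᶜ → X_B be injective maps. Set B' := p_A(B) ⊆ X_A and A' := p_B(A) ⊆ X_B, and let q_{B'} : (B')ᶜ → X_{AB} and q_{A'} : (A')ᶜ → X_{BA} be maps defined on the respective complements. Let φ'' : X_{AB} → X_{BA} be any map satisfying φ''(q_{B'}(p_A(w))) = q_{A'}(p_B(w)) for every w ∈ X with w ∉ A ∪ B. Then the image of the composed correspondence L(A, p_A) ∘ L(B', q_{B'}) ⊆ Sym X m × Sym X_{AB} (m-2) under the map (id × Sym.map φ'') equals the composed correspondence L(B, p_B) ∘ L(A', q_{A'}) ⊆ Sym X m × Sym X_{BA} (m-2). -/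

import Mathlib

/-- The set-level handle-attachment correspondence: pairs
`(⟦x₁, …, x_m⟧, ⟦p_A x₂, …, p_A x_m⟧)` with `x₁ ∈ A` and `x_i ∉ A` for `i ≥ 2`. -/
def HandleCorr {X XA : Type*} (A : Set X) (pA : (Aᶜ : Set X) → XA) (m : ℕ) :
    Set (Sym X m × Sym XA (m - 1)) :=
  { yx | ∃ (a : X) (_ : a ∈ A) (s : Multiset X) (hs : ∀ w ∈ s, w ∈ Aᶜ),
      (yx.1 : Multiset X) = a ::ₘ s ∧
      (yx.2 : Multiset XA) = s.pmap (fun w hw => pA ⟨w, hw⟩) hs }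

/-- The composition of two set-level correspondences. -/
def RelComp {S T U : Type*} (L : Set (S × T)) (L' : Set (T × U)) : Set (S × U) :=
  { su | ∃ t : T, (su.1, t) ∈ L ∧ (t, su.2) ∈ L' }

private lemma pmap_eq_cons' {α β : Type*} {p : α → Prop} (f : ∀ a, p a → β) {s t : Multiset α}
    {b : α} (h : s = b ::ₘ t) (hs : ∀ a ∈ s, p a) (hb : p b) (ht : ∀ a ∈ t, p a) :
    s.pmap f hs = f b hb ::ₘ t.pmap f ht := by
  subst h; rw [Multiset.pmap_cons]

private lemma key_map_pmap {X XA XB XAB XBA : Type*} {A B : Set X}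
    {pA : (Aᶜ : Set X) → XA} {pB : (Bᶜ : Set X) → XB}
    (qB' : (((pA '' (Subtype.val ⁻¹' B))ᶜ : Set XA)) → XAB)
    (qA' : (((pB '' (Subtype.val ⁻¹' A))ᶜ : Set XB)) → XBA)
    (φ'' : XAB → XBA)
    (hφ : ∀ (w : X) (hwA : w ∈ Aᶜ) (hwB : w ∈ Bᶜ)
        (h1 : pA ⟨w, hwA⟩ ∈ (pA '' (Subtype.val ⁻¹' B))ᶜ)
        (h2 : pB ⟨w, hwB⟩ ∈ (pB '' (Subtype.val ⁻¹' A))ᶜ),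
        φ'' (qB' ⟨pA ⟨w, hwA⟩, h1⟩) = qA' ⟨pB ⟨w, hwB⟩, h2⟩)
    (s : Multiset X) (hA : ∀ w ∈ s, w ∈ Aᶜ) (hB : ∀ w ∈ s, w ∈ Bᶜ)
    (h1 : ∀ x ∈ s.pmap (fun w hw => pA ⟨w, hw⟩) hA, x ∈ (pA '' (Subtype.val ⁻¹' B))ᶜ)
    (h2 : ∀ x ∈ s.pmap (fun w hw => pB ⟨w, hw⟩) hB, x ∈ (pB '' (Subtype.val ⁻¹' A))ᶜ) :
    Multiset.map φ''
        ((s.pmap (fun w hw => pA ⟨w, hw⟩) hA).pmap (fun x hx => qB' ⟨x, hx⟩) h1)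
      = (s.pmap (fun w hw => pB ⟨w, hw⟩) hB).pmap (fun x hx => qA' ⟨x, hx⟩) h2 := by
  induction s using Multiset.induction_on with
  | empty => simp
  | cons a t ih =>
      have hA' : ∀ w ∈ t, w ∈ Aᶜ := fun w hw => hA w (Multiset.mem_cons_of_mem hw)
      have hB' : ∀ w ∈ t, w ∈ Bᶜ := fun w hw => hB w (Multiset.mem_cons_of_mem hw)
      have e1 : Multiset.pmap (fun w hw => pA ⟨w, hw⟩) (a ::ₘ t) hA
          = pA ⟨a, hA a (Multiset.mem_cons_self a t)⟩
            ::ₘ Multiset.pmap (fun w hw => pA ⟨w, hw⟩) t hA' :=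
        pmap_eq_cons' _ rfl hA _ hA'
      have e2 : Multiset.pmap (fun w hw => pB ⟨w, hw⟩) (a ::ₘ t) hB
          = pB ⟨a, hB a (Multiset.mem_cons_self a t)⟩
            ::ₘ Multiset.pmap (fun w hw => pB ⟨w, hw⟩) t hB' :=
        pmap_eq_cons' _ rfl hB _ hB'
      have h1' : ∀ x ∈ Multiset.pmap (fun w hw => pA ⟨w, hw⟩) t hA',
          x ∈ (pA '' (Subtype.val ⁻¹' B))ᶜ :=
        fun x hx => h1 x (e1 ▸ Multiset.mem_cons_of_mem hx)
      have h2' : ∀ x ∈ Multiset.pmap (fun w hw => pB ⟨w, hw⟩) t hB',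
          x ∈ (pB '' (Subtype.val ⁻¹' A))ᶜ :=
        fun x hx => h2 x (e2 ▸ Multiset.mem_cons_of_mem hx)
      rw [pmap_eq_cons' _ e1 h1 (h1 _ (e1 ▸ Multiset.mem_cons_self _ _)) h1',
        pmap_eq_cons' _ e2 h2 (h2 _ (e2 ▸ Multiset.mem_cons_self _ _)) h2',
        Multiset.map_cons]
      congr 1
      · exact hφ a _ _ _ _
      · exact ih hA' hB' h1' h2'

/-- for disjoint attaching sets `A, B ⊆ X`, with `B' = p_A(B)`, `A' = p_B(A)`
and any map `φ'' : X_AB → X_BA` satisfying `φ''(q_{B'}(p_A w)) = q_{A'}(p_B w)` for all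
`w ∉ A ∪ B`, the image of the composed correspondence `L(A, p_A) ∘ L(B', q_{B'})` under
`id × Sym.map φ''` equals the composed correspondence `L(B, p_B) ∘ L(A', q_{A'})`. -/
theorem handleCorr_comp_equivariance {X XA XB XAB XBA : Type*} {m : ℕ} (hm : 2 ≤ m)
    {A B : Set X} (hdisj : Disjoint A B)
    {pA : (Aᶜ : Set X) → XA} {pB : (Bᶜ : Set X) → XB}
    (hpA : Function.Injective pA) (hpB : Function.Injective pB)
    (qB' : (((pA '' (Subtype.val ⁻¹' B))ᶜ : Set XA)) → XAB)
    (qA' : (((pB '' (Subtype.val ⁻¹' A))ᶜ : Set XB)) → XBA)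
    (φ'' : XAB → XBA)
    (hφ : ∀ (w : X) (hwA : w ∈ Aᶜ) (hwB : w ∈ Bᶜ)
        (h1 : pA ⟨w, hwA⟩ ∈ (pA '' (Subtype.val ⁻¹' B))ᶜ)
        (h2 : pB ⟨w, hwB⟩ ∈ (pB '' (Subtype.val ⁻¹' A))ᶜ),
        φ'' (qB' ⟨pA ⟨w, hwA⟩, h1⟩) = qA' ⟨pB ⟨w, hwB⟩, h2⟩) :
    Prod.map id (Sym.map φ'') ''
        RelComp (HandleCorr A pA m)
          (HandleCorr (pA '' (Subtype.val ⁻¹' B)) qB' (m - 1)) =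
      (RelComp (HandleCorr B pB m)
          (HandleCorr (pB '' (Subtype.val ⁻¹' A)) qA' (m - 1)) :
        Set (Sym X m × Sym XBA (m - 2))) := by
  have himA : ∀ (w : X) (hw : w ∈ Aᶜ), w ∉ B →
      pA ⟨w, hw⟩ ∈ (pA '' (Subtype.val ⁻¹' B))ᶜ := by
    rintro w hw hwB ⟨z, hz, hze⟩
    rw [hpA hze] at hz
    exact hwB hz
  have himB : ∀ (w : X) (hw : w ∈ Bᶜ), w ∉ A →
      pB ⟨w, hw⟩ ∈ (pB '' (Subtype.val ⁻¹' A))ᶜ := by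
    rintro w hw hwA ⟨z, hz, hze⟩
    rw [hpB hze] at hz
    exact hwA hz
  classical
  ext ⟨y, u⟩
  constructor
  · -- forward
    rintro ⟨⟨y', u'⟩, ⟨t, ⟨a, ha, s, hs, hy, ht⟩, ⟨b', ⟨z, hzB, rfl⟩, s', hs', ht', hu'⟩⟩, heq⟩
    have hy1 : y = y' := (congrArg Prod.fst heq).symm
    have hu1 : u = Sym.map φ'' u' := (congrArg Prod.snd heq).symm
    subst hy1; subst hu1
    replace hy : (y : Multiset X) = a ::ₘ s := hy
    replace ht : (t : Multiset XA) = Multiset.pmap (fun w hw => pA ⟨w, hw⟩) s hs := ht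
    replace ht' : (t : Multiset XA) = pA z ::ₘ s' := ht'
    replace hu' : (u' : Multiset XAB)
        = Multiset.pmap (fun x hx => qB' ⟨x, hx⟩) s' hs' := hu'
    -- z.val ∈ s
    have hmem : pA z ∈ Multiset.pmap (fun w hw => pA ⟨w, hw⟩) s hs := by
      rw [← ht, ht']; exact Multiset.mem_cons_self _ _
    obtain ⟨w, hw, hwe⟩ := Multiset.mem_pmap.mp hmem
    have hwz : w = (z : X) := congrArg Subtype.val (hpA hwe)
    subst hwz
    obtain ⟨s₀, rfl⟩ : ∃ s₀, s = (z : X) ::ₘ s₀ :=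
      ⟨s.erase (z : X), (Multiset.cons_erase hw).symm⟩
    have hs₀A : ∀ w ∈ s₀, w ∈ Aᶜ := fun w hw' => hs w (Multiset.mem_cons_of_mem hw')
    have epm : Multiset.pmap (fun w hw => pA ⟨w, hw⟩) ((z : X) ::ₘ s₀) hs
        = pA z ::ₘ Multiset.pmap (fun w hw => pA ⟨w, hw⟩) s₀ hs₀A :=
      pmap_eq_cons' _ rfl hs z.prop hs₀A
    have hs'eq : s' = Multiset.pmap (fun w hw => pA ⟨w, hw⟩) s₀ hs₀A :=
      (Multiset.cons_inj_right _).mp (by rw [← ht', ht, epm])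
    subst hs'eq
    have hs₀B : ∀ w ∈ s₀, w ∈ Bᶜ := by
      intro w hw' hwB
      exact hs' _ (Multiset.mem_pmap.mpr ⟨w, hw', rfl⟩) ⟨⟨w, hs₀A w hw'⟩, hwB, rfl⟩
    have haB : a ∈ Bᶜ := fun haB => hdisj.le_bot ⟨ha, haB⟩
    have hzA : (z : X) ∈ Aᶜ := z.prop
    have hsRB : ∀ w ∈ a ::ₘ s₀, w ∈ Bᶜ := by
      intro w hw'
      rcases Multiset.mem_cons.mp hw' with rfl | h
      · exact haB
      · exact hs₀B w h
    have hcard : Multiset.card s₀ + 2 = m := by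
      have hc : Multiset.card (y : Multiset X) = m := Sym.card_coe
      rw [hy] at hc
      simp only [Multiset.card_cons] at hc
      omega
    have hA'c : ∀ x ∈ Multiset.pmap (fun w hw => pB ⟨w, hw⟩) s₀ hs₀B,
        x ∈ (pB '' (Subtype.val ⁻¹' A))ᶜ := by
      intro x hx
      obtain ⟨w, hw', rfl⟩ := Multiset.mem_pmap.mp hx
      exact himB w (hs₀B w hw') (hs₀A w hw')
    refine ⟨⟨Multiset.pmap (fun w hw => pB ⟨w, hw⟩) (a ::ₘ s₀) hsRB, ?_⟩,
      ⟨(z : X), hzB, a ::ₘ s₀, hsRB, ?_, rfl⟩,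
      ⟨pB ⟨a, haB⟩, ⟨⟨a, haB⟩, ha, rfl⟩,
        Multiset.pmap (fun w hw => pB ⟨w, hw⟩) s₀ hs₀B, hA'c,
        pmap_eq_cons' _ rfl hsRB haB hs₀B, ?_⟩⟩
    · rw [Multiset.card_pmap, Multiset.card_cons]; omega
    · rw [hy]; exact Multiset.cons_swap _ _ _
    · show (Sym.map φ'' u' : Multiset XBA) = _
      rw [Sym.coe_map, hu']
      exact key_map_pmap qB' qA' φ'' hφ s₀ hs₀A hs₀B hs' hA'c
  · -- backward
    rintro ⟨t, ⟨b, hbB, s, hs, hy, ht⟩, ⟨a', ⟨z, hzA, rfl⟩, s', hs', ht', hu⟩⟩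
    replace hy : (y : Multiset X) = b ::ₘ s := hy
    replace ht : (t : Multiset XB) = Multiset.pmap (fun w hw => pB ⟨w, hw⟩) s hs := ht
    replace ht' : (t : Multiset XB) = pB z ::ₘ s' := ht'
    replace hu : (u : Multiset XBA)
        = Multiset.pmap (fun x hx => qA' ⟨x, hx⟩) s' hs' := hu
    have hmem : pB z ∈ Multiset.pmap (fun w hw => pB ⟨w, hw⟩) s hs := by
      rw [← ht, ht']; exact Multiset.mem_cons_self _ _
    obtain ⟨w, hw, hwe⟩ := Multiset.mem_pmap.mp hmem
    have hwz : w = (z : X) := congrArg Subtype.val (hpB hwe)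
    subst hwz
    obtain ⟨s₀, rfl⟩ : ∃ s₀, s = (z : X) ::ₘ s₀ :=
      ⟨s.erase (z : X), (Multiset.cons_erase hw).symm⟩
    have hs₀B : ∀ w ∈ s₀, w ∈ Bᶜ := fun w hw' => hs w (Multiset.mem_cons_of_mem hw')
    have epm : Multiset.pmap (fun w hw => pB ⟨w, hw⟩) ((z : X) ::ₘ s₀) hs
        = pB z ::ₘ Multiset.pmap (fun w hw => pB ⟨w, hw⟩) s₀ hs₀B :=
      pmap_eq_cons' _ rfl hs z.prop hs₀B
    have hs'eq : s' = Multiset.pmap (fun w hw => pB ⟨w, hw⟩) s₀ hs₀B :=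
      (Multiset.cons_inj_right _).mp (by rw [← ht', ht, epm])
    subst hs'eq
    have hs₀A : ∀ w ∈ s₀, w ∈ Aᶜ := by
      intro w hw' hwA
      exact hs' _ (Multiset.mem_pmap.mpr ⟨w, hw', rfl⟩) ⟨⟨w, hs₀B w hw'⟩, hwA, rfl⟩
    have hbA : b ∈ Aᶜ := fun hbA => hdisj.le_bot ⟨hbA, hbB⟩
    have hzB : (z : X) ∈ Bᶜ := z.prop
    have hsLA : ∀ w ∈ b ::ₘ s₀, w ∈ Aᶜ := by
      intro w hw'
      rcases Multiset.mem_cons.mp hw' with rfl | h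
      · exact hbA
      · exact hs₀A w h
    have hcard : Multiset.card s₀ + 2 = m := by
      have hc : Multiset.card (y : Multiset X) = m := Sym.card_coe
      rw [hy] at hc
      simp only [Multiset.card_cons] at hc
      omega
    have hB'c : ∀ x ∈ Multiset.pmap (fun w hw => pA ⟨w, hw⟩) s₀ hs₀A,
        x ∈ (pA '' (Subtype.val ⁻¹' B))ᶜ := by
      intro x hx
      obtain ⟨w, hw', rfl⟩ := Multiset.mem_pmap.mp hx
      exact himA w (hs₀A w hw') (hs₀B w hw')
    refine ⟨(y, ⟨(Multiset.pmap (fun w hw => pA ⟨w, hw⟩) s₀ hs₀A).pmap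
        (fun x hx => qB' ⟨x, hx⟩) hB'c, ?_⟩),
      ⟨⟨Multiset.pmap (fun w hw => pA ⟨w, hw⟩) (b ::ₘ s₀) hsLA, ?_⟩,
        ⟨(z : X), hzA, b ::ₘ s₀, hsLA, ?_, rfl⟩,
        ⟨pA ⟨b, hbA⟩, ⟨⟨b, hbA⟩, hbB, rfl⟩,
          Multiset.pmap (fun w hw => pA ⟨w, hw⟩) s₀ hs₀A, hB'c,
          pmap_eq_cons' _ rfl hsLA hbA hs₀A, rfl⟩⟩, ?_⟩
    · rw [Multiset.card_pmap, Multiset.card_pmap]; omega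
    · rw [Multiset.card_pmap, Multiset.card_cons]; omega
    · rw [hy]; exact Multiset.cons_swap _ _ _
    · refine Prod.ext rfl ?_
      show Sym.map φ'' _ = u
      apply Sym.coe_injective
      show Multiset.map φ''
          ((Multiset.pmap (fun w hw => pA ⟨w, hw⟩) s₀ hs₀A).pmap
            (fun x hx => qB' ⟨x, hx⟩) hB'c) = (u : Multiset XBA)
      rw [hu]
      exact key_map_pmap qB' qA' φ'' hφ s₀ hs₀A hs₀B hB'c hs'
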